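/- Let k be a field and s > t ≥ 3, y ≥ 3 integers. Let X = J_s ⊕ J_t ⊕ J_1 and Y = J_y ⊕ J_2, and let C : X → Y be the k[T]-linear map with components: multiplication by T^{y−2} from J_s to J_y and from J_t to J_y; the canonical reduction map from J_t to J_2; multiplication by T from J_1 to J_2; and zero from J_1 to J_y and from J_s to J_2. Then T²∘C = 0 and the triple (X, Y, C) is indecomposable. (In the paper this is the family with (s, t) = (m, k) for 3 ≤ k ≤ m−1 and 3 ≤ y ≤ n.) -/

import Mathlib

open Polynomial

/-- `J K a` is the `K[T]`-module `K[T]/(T^a)` (with `T` the polynomial variable `X`). -/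
abbrev J (K : Type*) [Field K] (a : ℕ) : Type _ :=
  Polynomial K ⧸ Ideal.span {(X : Polynomial K) ^ a}

/-- Multiplication by `T^e` as a `K[T]`-linear map `J_a → J_b`; it is well defined
when `b ≤ e + a`, and we set it to `0` otherwise. -/
noncomputable def mulTpow (K : Type*) [Field K] (a b e : ℕ) :
    J K a →ₗ[Polynomial K] J K b :=
  if h : b ≤ e + a then
    Submodule.liftQ (Ideal.span {(X : Polynomial K) ^ a})
      ((Ideal.span {(X : Polynomial K) ^ b}).mkQ ∘ₗ
        ((X : Polynomial K) ^ e • (LinearMap.id : Polynomial K →ₗ[Polynomial K] Polynomial K)))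
      (by
        refine Submodule.span_le.mpr ?_
        intro x hx
        rw [Set.mem_singleton_iff] at hx
        subst hx
        simp only [SetLike.mem_coe, LinearMap.mem_ker, LinearMap.comp_apply,
          LinearMap.smul_apply, LinearMap.id_apply, Submodule.mkQ_apply,
          Submodule.Quotient.mk_eq_zero, smul_eq_mul]
        exact Ideal.mem_span_singleton.mpr (by
          rw [← pow_add]; exact pow_dvd_pow X h))
  else 0

/-- A triple `(M, N, C)` is indecomposable if `M ⊕ N ≠ 0` and the only idempotent
endomorphism pairs `(F, G)` (i.e. `G ∘ C = C ∘ F`, `F² = F`, `G² = G`) are `(0, 0)` and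
`(id, id)`. -/
def TripleIndecomposable {K : Type*} [Field K] {M N : Type*}
    [AddCommGroup M] [Module (Polynomial K) M]
    [AddCommGroup N] [Module (Polynomial K) N] (C : M →ₗ[Polynomial K] N) : Prop :=
  (Nontrivial M ∨ Nontrivial N) ∧
  ∀ (F : M →ₗ[Polynomial K] M) (G : N →ₗ[Polynomial K] N),
    G ∘ₗ C = C ∘ₗ F → F ∘ₗ F = F → G ∘ₗ G = G →
      (F = 0 ∧ G = 0) ∨ (F = LinearMap.id ∧ G = LinearMap.id)

section Aux
variable {K : Type*} [Field K]

noncomputable abbrev jmk (K : Type*) [Field K] (a : ℕ) (p : Polynomial K) : J K a :=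
  Ideal.Quotient.mk (Ideal.span {(X : Polynomial K) ^ a}) p

theorem jmk_surjective (a : ℕ) : Function.Surjective (jmk K a) :=
  Ideal.Quotient.mk_surjective

noncomputable def co (a i : ℕ) (x : J K a) : K :=
  (AdjoinRoot.modByMonicHom (monic_X_pow (R := K) a) x).coeff i

theorem co_jmk {a i : ℕ} (h : i < a) (p : Polynomial K) :
    co a i (jmk K a p) = p.coeff i := by
  have hp : (jmk K a p) = AdjoinRoot.mk ((X : Polynomial K) ^ a) p := rfl
  rw [co, hp, AdjoinRoot.modByMonicHom_mk, modByMonic_eq_sub_mul_div _ ((X : Polynomial K) ^ a),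
    coeff_sub, mul_comm, coeff_mul_X_pow', if_neg (not_le.2 h), sub_zero]

theorem co_add {a i : ℕ} (x y : J K a) : co a i (x + y) = co a i x + co a i y := by
  simp only [co]; rw [← coeff_add]
  exact congrArg (fun f => coeff f i) (map_add (AdjoinRoot.modByMonicHom (monic_X_pow (R := K) a)) x y)

theorem co_sub {a i : ℕ} (x y : J K a) : co a i (x - y) = co a i x - co a i y := by
  simp only [co]; rw [← coeff_sub]
  exact congrArg (fun f => coeff f i) (map_sub (AdjoinRoot.modByMonicHom (monic_X_pow (R := K) a)) x y)

theorem co_zero {a i : ℕ} : co a i (0 : J K a) = 0 := by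
  simp only [co]
  exact (congrArg (fun f => coeff f i) (map_zero (AdjoinRoot.modByMonicHom (monic_X_pow (R := K) a)))).trans (coeff_zero i)

theorem jmk_smul {a : ℕ} (p q : Polynomial K) :
    p • jmk K a q = jmk K a (p * q) := by
  rw [← smul_eq_mul]
  exact (Submodule.Quotient.mk_smul _ _ _).symm

theorem jmk_eq_zero {a : ℕ} {p : Polynomial K} (h : (X : Polynomial K) ^ a ∣ p) :
    jmk K a p = 0 := by
  rw [Ideal.Quotient.eq_zero_iff_mem, Ideal.mem_span_singleton]; exact h

theorem co_smul0 {a : ℕ} (ha : 0 < a) (p : Polynomial K) (x : J K a) :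
    co a 0 (p • x) = p.coeff 0 * co a 0 x := by
  obtain ⟨q, rfl⟩ := jmk_surjective a x
  rw [jmk_smul, co_jmk ha, co_jmk ha, mul_coeff_zero]

theorem co_smulXpow {a e i : ℕ} (h : e + i < a) (x : J K a) :
    co a (e + i) ((X : Polynomial K) ^ e • x) = co a i x := by
  obtain ⟨q, rfl⟩ := jmk_surjective a x
  rw [jmk_smul, co_jmk h, co_jmk (lt_of_le_of_lt (Nat.le_add_left i e) h),
    show e + i = i + e from Nat.add_comm e i, coeff_X_pow_mul]

theorem co_smul_lt {a e i : ℕ} (hi : i < e) (ha : i < a) (x : J K a) :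
    co a i ((X : Polynomial K) ^ e • x) = 0 := by
  obtain ⟨q, rfl⟩ := jmk_surjective a x
  rw [jmk_smul, co_jmk ha, mul_comm, coeff_mul_X_pow', if_neg (not_le.2 hi)]

theorem mulTpow_jmk {a b e : ℕ} (h : b ≤ e + a) (p : Polynomial K) :
    mulTpow K a b e (jmk K a p) = jmk K b ((X : Polynomial K) ^ e * p) := by
  have h1 : mulTpow K a b e (jmk K a p) =
      (Ideal.span {(X : Polynomial K) ^ b}).mkQ ((X : Polynomial K) ^ e • p) := by
    rw [mulTpow, dif_pos h]; rfl
  rw [h1, smul_eq_mul]; rfl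

theorem co_mulTpow {a b e i : ℕ} (h : b ≤ e + a) (hi : e + i < b) (x : J K a) :
    co b (e + i) (mulTpow K a b e x) = co a i x := by
  obtain ⟨q, rfl⟩ := jmk_surjective a x
  rw [mulTpow_jmk h, co_jmk hi, co_jmk (by omega),
    show e + i = i + e from Nat.add_comm e i, coeff_X_pow_mul]

theorem co_mulTpow_lt {a b e i : ℕ} (h : b ≤ e + a) (hi : i < e) (hb : i < b) (x : J K a) :
    co b i (mulTpow K a b e x) = 0 := by
  obtain ⟨q, rfl⟩ := jmk_surjective a x
  rw [mulTpow_jmk h, co_jmk hb, mul_comm, coeff_mul_X_pow', if_neg (not_le.2 hi)]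

theorem co_torsion {a m i : ℕ} {x : J K a} (h : (X : Polynomial K) ^ m • x = 0)
    (hi : i + m < a) : co a i x = 0 := by
  obtain ⟨q, rfl⟩ := jmk_surjective a x
  rw [jmk_smul] at h
  rw [Ideal.Quotient.eq_zero_iff_mem, Ideal.mem_span_singleton] at h
  obtain ⟨d, hd⟩ := h
  have h1 : ((X : Polynomial K) ^ m * q).coeff (i + m) = q.coeff i := coeff_X_pow_mul q m i
  rw [hd] at h1
  rw [co_jmk (by omega), ← h1, mul_comm, coeff_mul_X_pow', if_neg (by omega)]

theorem eps_dvd {a : ℕ} (ha : 0 < a) {x : J K a} (h : co a 0 x = 0) :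
    ∃ z : J K a, x = (X : Polynomial K) • z := by
  obtain ⟨q, rfl⟩ := jmk_surjective a x
  rw [co_jmk ha] at h
  obtain ⟨d, hd⟩ := X_dvd_iff.2 h
  exact ⟨jmk K a d, by rw [hd, ← jmk_smul]⟩

theorem jkill {a m : ℕ} (h : a ≤ m) (x : J K a) : (X : Polynomial K) ^ m • x = 0 := by
  obtain ⟨q, rfl⟩ := jmk_surjective a x
  rw [jmk_smul]
  exact jmk_eq_zero (dvd_mul_of_dvd_left (pow_dvd_pow X h) q)

theorem smul_mulTpow_zero {a b e m : ℕ} (h : b ≤ e + m) (x : J K a) :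
    (X : Polynomial K) ^ m • mulTpow K a b e x = 0 := by
  by_cases hba : b ≤ e + a
  · obtain ⟨q, rfl⟩ := jmk_surjective a x
    rw [mulTpow_jmk hba, jmk_smul]
    refine jmk_eq_zero ?_
    rw [← mul_assoc, ← pow_add]
    exact dvd_mul_of_dvd_left (pow_dvd_pow X (by omega)) q
  · rw [mulTpow, dif_neg hba, LinearMap.zero_apply, smul_zero]

theorem idem_eq_zero {M : Type*} [AddCommGroup M] [Module (Polynomial K) M]
    (n : ℕ) (hkill : ∀ x : M, (X : Polynomial K) ^ n • x = 0)
    (F : M →ₗ[Polynomial K] M) (hFF : F ∘ₗ F = F)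
    (hF : ∀ x, ∃ z, F x = (X : Polynomial K) • z) : F = 0 := by
  have hFF' : ∀ x, F (F x) = F x := fun x => congrFun (congrArg DFunLike.coe hFF) x
  have key : ∀ m : ℕ, ∀ x, ∃ z, F x = (X : Polynomial K) ^ m • F z := by
    intro m
    induction m with
    | zero => exact fun x => ⟨x, by simp [hFF' x]⟩
    | succ m ih =>
      intro x
      obtain ⟨z, hz⟩ := ih x
      obtain ⟨w, hw⟩ := hF z
      refine ⟨w, ?_⟩
      have hx : F x = (X : Polynomial K) ^ (m + 1) • w := by
        rw [hz, hw, smul_smul, ← pow_succ]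
      rw [← hFF' x, hx, map_smul]
  ext x
  obtain ⟨z, hz⟩ := key n x
  rw [LinearMap.zero_apply, hz, hkill]

theorem nontrivial_J {a : ℕ} (ha : 0 < a) : Nontrivial (J K a) := by
  refine Ideal.Quotient.nontrivial_iff.mpr ?_
  intro h
  have h1 : (1 : Polynomial K) ∈ Ideal.span {(X : Polynomial K) ^ a} := h ▸ trivial
  obtain ⟨d, hd⟩ := Ideal.mem_span_singleton.1 h1
  have hu : IsUnit ((X : Polynomial K) ^ a) := IsUnit.of_mul_eq_one _ hd.symm
  have hdeg := degree_eq_zero_of_isUnit hu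
  rw [degree_X_pow] at hdeg
  exact absurd hdeg (by simpa using ha.ne')

/-- generators -/
noncomputable def Ee1 (K : Type*) [Field K] (s t : ℕ) : J K s × (J K t × J K 1) :=
  (jmk K s 1, 0, 0)
noncomputable def Ee2 (K : Type*) [Field K] (s t : ℕ) : J K s × (J K t × J K 1) :=
  (0, jmk K t 1, 0)
noncomputable def Ee3 (K : Type*) [Field K] (s t : ℕ) : J K s × (J K t × J K 1) :=
  (0, 0, jmk K 1 1)
noncomputable def Pp1 (K : Type*) [Field K] (y : ℕ) : J K y × J K 2 := (jmk K y 1, 0)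
noncomputable def Pp2 (K : Type*) [Field K] (y : ℕ) : J K y × J K 2 := (0, jmk K 2 1)

theorem mk3 {s t : ℕ} (p q r : Polynomial K) :
    (jmk K s p, jmk K t q, jmk K 1 r) = p • Ee1 K s t + q • Ee2 K s t + r • Ee3 K s t := by
  simp only [Ee1, Ee2, Ee3, Prod.smul_mk, Prod.mk_add_mk, smul_zero, add_zero, zero_add,
    jmk_smul, mul_one]

theorem mk2 {y : ℕ} (p q : Polynomial K) :
    (jmk K y p, jmk K 2 q) = p • Pp1 K y + q • Pp2 K y := by
  simp only [Pp1, Pp2, Prod.smul_mk, Prod.mk_add_mk, smul_zero, add_zero, zero_add,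
    jmk_smul, mul_one]

theorem hXdvd3 {s t : ℕ} (hs : 0 < s) (ht : 0 < t)
    (F : (J K s × (J K t × J K 1)) →ₗ[Polynomial K] (J K s × (J K t × J K 1)))
    (h11 : co s 0 (F (Ee1 K s t)).1 = 0) (h21 : co t 0 (F (Ee1 K s t)).2.1 = 0)
    (h31 : co 1 0 (F (Ee1 K s t)).2.2 = 0)
    (h12 : co s 0 (F (Ee2 K s t)).1 = 0) (h22 : co t 0 (F (Ee2 K s t)).2.1 = 0)
    (h32 : co 1 0 (F (Ee2 K s t)).2.2 = 0)
    (h13 : co s 0 (F (Ee3 K s t)).1 = 0) (h23 : co t 0 (F (Ee3 K s t)).2.1 = 0)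
    (h33 : co 1 0 (F (Ee3 K s t)).2.2 = 0) :
    ∀ z, ∃ w, F z = (X : Polynomial K) • w := by
  intro z
  obtain ⟨p, hp⟩ := jmk_surjective s z.1
  obtain ⟨q, hq⟩ := jmk_surjective t z.2.1
  obtain ⟨r, hr⟩ := jmk_surjective 1 z.2.2
  have hz : z = p • Ee1 K s t + q • Ee2 K s t + r • Ee3 K s t := by
    rw [← mk3, hp, hq, hr]
  have hFz : F z = p • F (Ee1 K s t) + q • F (Ee2 K s t) + r • F (Ee3 K s t) := by
    rw [hz, map_add, map_add, map_smul, map_smul, map_smul]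
  have c1 : co s 0 (F z).1 = 0 := by
    rw [hFz]
    simp only [Prod.fst_add, Prod.smul_fst]
    rw [co_add, co_add, co_smul0 hs, co_smul0 hs, co_smul0 hs, h11, h12, h13]
    ring
  have c2 : co t 0 (F z).2.1 = 0 := by
    rw [hFz]
    simp only [Prod.snd_add, Prod.smul_snd, Prod.fst_add, Prod.smul_fst]
    rw [co_add, co_add, co_smul0 ht, co_smul0 ht, co_smul0 ht, h21, h22, h23]
    ring
  have c3 : co 1 0 (F z).2.2 = 0 := by
    rw [hFz]
    simp only [Prod.snd_add, Prod.smul_snd]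
    rw [co_add, co_add, co_smul0 one_pos, co_smul0 one_pos, co_smul0 one_pos, h31, h32, h33]
    ring
  obtain ⟨w1, hw1⟩ := eps_dvd hs c1
  obtain ⟨w2, hw2⟩ := eps_dvd ht c2
  obtain ⟨w3, hw3⟩ := eps_dvd one_pos c3
  refine ⟨(w1, w2, w3), ?_⟩
  refine Prod.ext hw1 (Prod.ext hw2 hw3)

theorem hXdvd2 {y : ℕ} (hy : 0 < y)
    (G : (J K y × J K 2) →ₗ[Polynomial K] (J K y × J K 2))
    (h11 : co y 0 (G (Pp1 K y)).1 = 0) (h21 : co 2 0 (G (Pp1 K y)).2 = 0)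
    (h12 : co y 0 (G (Pp2 K y)).1 = 0) (h22 : co 2 0 (G (Pp2 K y)).2 = 0) :
    ∀ z, ∃ w, G z = (X : Polynomial K) • w := by
  intro z
  obtain ⟨p, hp⟩ := jmk_surjective y z.1
  obtain ⟨q, hq⟩ := jmk_surjective 2 z.2
  have hz : z = p • Pp1 K y + q • Pp2 K y := by rw [← mk2, hp, hq]
  have hGz : G z = p • G (Pp1 K y) + q • G (Pp2 K y) := by
    rw [hz, map_add, map_smul, map_smul]
  have c1 : co y 0 (G z).1 = 0 := by
    rw [hGz]
    simp only [Prod.fst_add, Prod.smul_fst]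
    rw [co_add, co_smul0 hy, co_smul0 hy, h11, h12]
    ring
  have c2 : co 2 0 (G z).2 = 0 := by
    rw [hGz]
    simp only [Prod.snd_add, Prod.smul_snd]
    rw [co_add, co_smul0 two_pos, co_smul0 two_pos, h21, h22]
    ring
  obtain ⟨w1, hw1⟩ := eps_dvd hy c1
  obtain ⟨w2, hw2⟩ := eps_dvd two_pos c2
  exact ⟨(w1, w2), Prod.ext hw1 hw2⟩

theorem cancel2 {L x : K} (hL : L = 0 ∨ L = 1) (h : L * x + x * L = x) : x = 0 := by
  rcases hL with h0 | h1
  · subst h0; simpa using h.symm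
  · subst h1
    rw [one_mul, mul_one] at h
    have : x + x - x = x - x := by rw [h]
    simpa using this

end Aux

set_option maxHeartbeats 16000000 in
/-- For `s > t ≥ 3`, `y ≥ 3`, the map `C : J_s ⊕ J_t ⊕ J_1 → J_y ⊕ J_2` with components
`T^{y-2} : J_s → J_y`, `T^{y-2} : J_t → J_y`, the canonical reduction `J_t → J_2`,
`T : J_1 → J_2`, and zero from `J_1` to `J_y` and from `J_s` to `J_2`, satisfies
`T² ∘ C = 0`, and the triple `(J_s ⊕ J_t ⊕ J_1, J_y ⊕ J_2, C)` is indecomposable. -/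
theorem triple_2x3_indecomposable (K : Type*) [Field K] (s t y : ℕ)
    (hts : t < s) (ht : 3 ≤ t) (hy : 3 ≤ y) :
    (∀ x, ((X : Polynomial K) ^ 2) •
      (LinearMap.prod
        ((mulTpow K s y (y - 2)).coprod
          ((mulTpow K t y (y - 2)).coprod (0 : J K 1 →ₗ[Polynomial K] J K y)))
        ((0 : J K s →ₗ[Polynomial K] J K 2).coprod
          ((mulTpow K t 2 0).coprod (mulTpow K 1 2 1)))) x = 0) ∧
    TripleIndecomposable
      (LinearMap.prod
        ((mulTpow K s y (y - 2)).coprod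
          ((mulTpow K t y (y - 2)).coprod (0 : J K 1 →ₗ[Polynomial K] J K y)))
        ((0 : J K s →ₗ[Polynomial K] J K 2).coprod
          ((mulTpow K t 2 0).coprod (mulTpow K 1 2 1)))) := by
  set CC := LinearMap.prod
        ((mulTpow K s y (y - 2)).coprod
          ((mulTpow K t y (y - 2)).coprod (0 : J K 1 →ₗ[Polynomial K] J K y)))
        ((0 : J K s →ₗ[Polynomial K] J K 2).coprod
          ((mulTpow K t 2 0).coprod (mulTpow K 1 2 1))) with hCC
  have hCap : ∀ z : J K s × (J K t × J K 1), CC z =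
      (mulTpow K s y (y - 2) z.1 + mulTpow K t y (y - 2) z.2.1,
       mulTpow K t 2 0 z.2.1 + mulTpow K 1 2 1 z.2.2) := by
    rintro ⟨z1, z2, z3⟩
    rw [hCC]
    simp [LinearMap.prod_apply, LinearMap.coprod_apply]
  constructor
  · rintro ⟨x1, x2, x3⟩
    rw [hCap]
    rw [Prod.smul_mk, Prod.mk_eq_zero]
    refine ⟨?_, ?_⟩
    · rw [smul_add, smul_mulTpow_zero (by omega), smul_mulTpow_zero (by omega), add_zero]
    · rw [smul_add, smul_mulTpow_zero (by omega), smul_mulTpow_zero (by omega), add_zero]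
  refine ⟨Or.inl ?_, ?_⟩
  · obtain ⟨x, z, hxz⟩ := nontrivial_J (K := K) (a := s) (by omega)
    exact ⟨(x, 0, 0), (z, 0, 0), fun h => hxz (congrArg Prod.fst h)⟩
  intro F G hGC hFF hGG
  have hGCF : ∀ z, G (CC z) = CC (F z) := fun z => congrFun (congrArg DFunLike.coe hGC) z
  have hFF' : ∀ z, F (F z) = F z := fun z => congrFun (congrArg DFunLike.coe hFF) z
  have hGG' : ∀ z, G (G z) = G z := fun z => congrFun (congrArg DFunLike.coe hGG) z
  -- C on generators
  have hsP1 : ∀ p : Polynomial K, p • Pp1 K y = (jmk K y p, 0) := by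
    intro p
    simp only [Pp1, Prod.smul_mk, smul_zero, jmk_smul, mul_one]
  have hsP2 : ∀ p : Polynomial K, p • Pp2 K y = (0, jmk K 2 p) := by
    intro p
    simp only [Pp2, Prod.smul_mk, smul_zero, jmk_smul, mul_one]
  have hCE1 : CC (Ee1 K s t) = (X : Polynomial K) ^ (y - 2) • Pp1 K y := by
    rw [hCap, hsP1, Prod.mk.injEq]
    constructor
    · show mulTpow K s y (y - 2) (jmk K s 1) + mulTpow K t y (y - 2) 0
        = jmk K y ((X : Polynomial K) ^ (y - 2))
      rw [map_zero, add_zero, mulTpow_jmk (by omega), mul_one]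
    · show mulTpow K t 2 0 0 + mulTpow K 1 2 1 0 = 0
      rw [map_zero, map_zero, add_zero]
  have hCE2 : CC (Ee2 K s t) = (X : Polynomial K) ^ (y - 2) • Pp1 K y + Pp2 K y := by
    rw [hCap, hsP1, show Pp2 K y = ((0 : J K y), jmk K 2 1) from rfl, Prod.mk_add_mk,
      add_zero, zero_add, Prod.mk.injEq]
    constructor
    · show mulTpow K s y (y - 2) 0 + mulTpow K t y (y - 2) (jmk K t 1)
        = jmk K y ((X : Polynomial K) ^ (y - 2))
      rw [map_zero, zero_add, mulTpow_jmk (by omega), mul_one]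
    · show mulTpow K t 2 0 (jmk K t 1) + mulTpow K 1 2 1 0 = jmk K 2 1
      rw [map_zero, add_zero, mulTpow_jmk (by omega), pow_zero, one_mul]
  have hCE3 : CC (Ee3 K s t) = (X : Polynomial K) • Pp2 K y := by
    rw [hCap, hsP2, Prod.mk.injEq]
    constructor
    · show mulTpow K s y (y - 2) 0 + mulTpow K t y (y - 2) 0 = 0
      rw [map_zero, map_zero, add_zero]
    · show mulTpow K t 2 0 0 + mulTpow K 1 2 1 (jmk K 1 1) = jmk K 2 X
      rw [map_zero, zero_add, mulTpow_jmk (by omega), pow_one, mul_one]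
  -- main equations
  have EqU : (X : Polynomial K) ^ (y - 2) • G (Pp1 K y) = CC (F (Ee1 K s t)) := by
    rw [← map_smul, ← hCE1, hGCF]
  have EqV : (X : Polynomial K) ^ (y - 2) • G (Pp1 K y) + G (Pp2 K y) = CC (F (Ee2 K s t)) := by
    rw [← map_smul, ← map_add, ← hCE2, hGCF]
  have EqW : (X : Polynomial K) • G (Pp2 K y) = CC (F (Ee3 K s t)) := by
    rw [← map_smul, ← hCE3, hGCF]
  rw [hCap] at EqU EqV EqW
  have EqU1 : (X : Polynomial K) ^ (y - 2) • (G (Pp1 K y)).1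
      = mulTpow K s y (y - 2) (F (Ee1 K s t)).1 + mulTpow K t y (y - 2) (F (Ee1 K s t)).2.1 := by
    have h := congrArg Prod.fst EqU; simpa using h
  have EqU2 : (X : Polynomial K) ^ (y - 2) • (G (Pp1 K y)).2
      = mulTpow K t 2 0 (F (Ee1 K s t)).2.1 + mulTpow K 1 2 1 (F (Ee1 K s t)).2.2 := by
    have h := congrArg Prod.snd EqU; simpa using h
  have EqV1 : (X : Polynomial K) ^ (y - 2) • (G (Pp1 K y)).1 + (G (Pp2 K y)).1
      = mulTpow K s y (y - 2) (F (Ee2 K s t)).1 + mulTpow K t y (y - 2) (F (Ee2 K s t)).2.1 := by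
    have h := congrArg Prod.fst EqV; simpa using h
  have EqV2 : (X : Polynomial K) ^ (y - 2) • (G (Pp1 K y)).2 + (G (Pp2 K y)).2
      = mulTpow K t 2 0 (F (Ee2 K s t)).2.1 + mulTpow K 1 2 1 (F (Ee2 K s t)).2.2 := by
    have h := congrArg Prod.snd EqV; simpa using h
  have EqW1 : (X : Polynomial K) • (G (Pp2 K y)).1
      = mulTpow K s y (y - 2) (F (Ee3 K s t)).1 + mulTpow K t y (y - 2) (F (Ee3 K s t)).2.1 := by
    have h := congrArg Prod.fst EqW; simpa using h
  have EqW2 : (X : Polynomial K) • (G (Pp2 K y)).2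
      = mulTpow K t 2 0 (F (Ee3 K s t)).2.1 + mulTpow K 1 2 1 (F (Ee3 K s t)).2.2 := by
    have h := congrArg Prod.snd EqW; simpa using h
  -- torsion facts
  have hE2tor : (X : Polynomial K) ^ t • Ee2 K s t = 0 := by
    simp only [Ee2, Prod.smul_mk, smul_zero, jmk_smul, mul_one]
    rw [jmk_eq_zero dvd_rfl]
    rfl
  have hE3tor : (X : Polynomial K) ^ 1 • Ee3 K s t = 0 := by
    simp only [Ee3, Prod.smul_mk, smul_zero, jmk_smul, mul_one]
    rw [jmk_eq_zero dvd_rfl]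
    rfl
  have hP2tor : (X : Polynomial K) ^ 2 • Pp2 K y = 0 := by
    simp only [Pp2, Prod.smul_mk, smul_zero, jmk_smul, mul_one]
    rw [jmk_eq_zero dvd_rfl]
    rfl
  have hTB : (X : Polynomial K) ^ t • F (Ee2 K s t) = 0 := by
    rw [← map_smul, hE2tor, map_zero]
  have hTD : (X : Polynomial K) ^ 1 • F (Ee3 K s t) = 0 := by
    rw [← map_smul, hE3tor, map_zero]
  have hTH : (X : Polynomial K) ^ 2 • G (Pp2 K y) = 0 := by
    rw [← map_smul, hP2tor, map_zero]
  have hTB1 : (X : Polynomial K) ^ t • (F (Ee2 K s t)).1 = 0 := by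
    have := congrArg Prod.fst hTB; simpa using this
  have hTD1 : (X : Polynomial K) ^ 1 • (F (Ee3 K s t)).1 = 0 := by
    have := congrArg Prod.fst hTD; simpa using this
  have hTD2 : (X : Polynomial K) ^ 1 • (F (Ee3 K s t)).2.1 = 0 := by
    have := congrArg (fun z => z.2.1) hTD; simpa using this
  have hTH1 : (X : Polynomial K) ^ 2 • (G (Pp2 K y)).1 = 0 := by
    have := congrArg Prod.fst hTH; simpa using this
  -- scalar equations
  have hb1 : co (K := K) s 0 (F (Ee2 K s t)).1 = 0 := co_torsion hTB1 (by omega)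
  have hd1 : co (K := K) s 0 (F (Ee3 K s t)).1 = 0 := co_torsion hTD1 (by omega)
  have hd1' : co (K := K) s 1 (F (Ee3 K s t)).1 = 0 := co_torsion hTD1 (by omega)
  have hd2 : co (K := K) t 0 (F (Ee3 K s t)).2.1 = 0 := co_torsion hTD2 (by omega)
  have hd2' : co (K := K) t 1 (F (Ee3 K s t)).2.1 = 0 := co_torsion hTD2 (by omega)
  have hh1 : co (K := K) y 0 (G (Pp2 K y)).1 = 0 := co_torsion hTH1 (by omega)
  have ha2 : co (K := K) t 0 (F (Ee1 K s t)).2.1 = 0 := by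
    have h := congrArg (co (K := K) 2 0) EqU2
    have l1 : co (K := K) 2 0 ((X : Polynomial K) ^ (y - 2) • (G (Pp1 K y)).2) = 0 :=
      co_smul_lt (by omega) (by omega) _
    have m1 : co (K := K) 2 0 (mulTpow K t 2 0 (F (Ee1 K s t)).2.1)
        = co (K := K) t 0 (F (Ee1 K s t)).2.1 := by
      simpa using co_mulTpow (K := K) (a := t) (b := 2) (e := 0) (i := 0) (by omega) (by omega) _
    have m2 : co (K := K) 2 0 (mulTpow K 1 2 1 (F (Ee1 K s t)).2.2) = 0 :=
      co_mulTpow_lt (by omega) (by omega) (by omega) _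
    rw [l1, co_add, m1, m2, add_zero] at h
    exact h.symm
  have he1 : co (K := K) y 0 (G (Pp1 K y)).1 = co (K := K) s 0 (F (Ee1 K s t)).1 := by
    have h := congrArg (co (K := K) y (y - 2)) EqU1
    have l1 : co (K := K) y (y - 2) ((X : Polynomial K) ^ (y - 2) • (G (Pp1 K y)).1)
        = co (K := K) y 0 (G (Pp1 K y)).1 := by
      simpa using co_smulXpow (K := K) (a := y) (e := y - 2) (i := 0) (by omega) _
    have m1 : co (K := K) y (y - 2) (mulTpow K s y (y - 2) (F (Ee1 K s t)).1)
        = co (K := K) s 0 (F (Ee1 K s t)).1 := by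
      simpa using co_mulTpow (K := K) (a := s) (b := y) (e := y - 2) (i := 0) (by omega) (by omega) _
    have m2 : co (K := K) y (y - 2) (mulTpow K t y (y - 2) (F (Ee1 K s t)).2.1) = 0 := by
      have h2 := co_mulTpow (K := K) (a := t) (b := y) (e := y - 2) (i := 0) (by omega) (by omega)
        (F (Ee1 K s t)).2.1
      simpa [ha2] using h2
    rw [l1, co_add, m1, m2, add_zero] at h
    exact h
  have hmu : co (K := K) y (y - 2) (G (Pp2 K y)).1 = 0 := by
    have h := congrArg (co (K := K) y (y - 1)) EqW1
    have l1 : co (K := K) y (y - 1) ((X : Polynomial K) • (G (Pp2 K y)).1)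
        = co (K := K) y (y - 2) (G (Pp2 K y)).1 := by
      have h2 := co_smulXpow (K := K) (a := y) (e := 1) (i := y - 2) (by omega) (G (Pp2 K y)).1
      rw [pow_one] at h2
      rw [show y - 1 = 1 + (y - 2) from by omega]
      exact h2
    have m1 : co (K := K) y (y - 1) (mulTpow K s y (y - 2) (F (Ee3 K s t)).1) = 0 := by
      have h2 := co_mulTpow (K := K) (a := s) (b := y) (e := y - 2) (i := 1) (by omega) (by omega)
        (F (Ee3 K s t)).1
      rw [show y - 1 = (y - 2) + 1 from by omega, h2, hd1']
    have m2 : co (K := K) y (y - 1) (mulTpow K t y (y - 2) (F (Ee3 K s t)).2.1) = 0 := by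
      have h2 := co_mulTpow (K := K) (a := t) (b := y) (e := y - 2) (i := 1) (by omega) (by omega)
        (F (Ee3 K s t)).2.1
      rw [show y - 1 = (y - 2) + 1 from by omega, h2, hd2']
    rw [l1, co_add, m1, m2, add_zero] at h
    exact h
  have hb2 : co (K := K) t 0 (F (Ee2 K s t)).2.1 = co (K := K) s 0 (F (Ee1 K s t)).1 := by
    have h := congrArg (co (K := K) y (y - 2)) EqV1
    have l1 : co (K := K) y (y - 2) ((X : Polynomial K) ^ (y - 2) • (G (Pp1 K y)).1)
        = co (K := K) y 0 (G (Pp1 K y)).1 := by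
      simpa using co_smulXpow (K := K) (a := y) (e := y - 2) (i := 0) (by omega) _
    have m1 : co (K := K) y (y - 2) (mulTpow K s y (y - 2) (F (Ee2 K s t)).1) = 0 := by
      have h2 := co_mulTpow (K := K) (a := s) (b := y) (e := y - 2) (i := 0) (by omega) (by omega)
        (F (Ee2 K s t)).1
      simpa [hb1] using h2
    have m2 : co (K := K) y (y - 2) (mulTpow K t y (y - 2) (F (Ee2 K s t)).2.1)
        = co (K := K) t 0 (F (Ee2 K s t)).2.1 := by
      simpa using co_mulTpow (K := K) (a := t) (b := y) (e := y - 2) (i := 0) (by omega) (by omega) _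
    rw [co_add, l1, co_add, m1, m2, he1, hmu, add_zero, zero_add] at h
    exact h.symm
  have hh2 : co (K := K) 2 0 (G (Pp2 K y)).2 = co (K := K) s 0 (F (Ee1 K s t)).1 := by
    have h := congrArg (co (K := K) 2 0) EqV2
    have l1 : co (K := K) 2 0 ((X : Polynomial K) ^ (y - 2) • (G (Pp1 K y)).2) = 0 :=
      co_smul_lt (by omega) (by omega) _
    have m1 : co (K := K) 2 0 (mulTpow K t 2 0 (F (Ee2 K s t)).2.1)
        = co (K := K) t 0 (F (Ee2 K s t)).2.1 := by
      simpa using co_mulTpow (K := K) (a := t) (b := 2) (e := 0) (i := 0) (by omega) (by omega) _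
    have m2 : co (K := K) 2 0 (mulTpow K 1 2 1 (F (Ee2 K s t)).2.2) = 0 :=
      co_mulTpow_lt (by omega) (by omega) (by omega) _
    rw [co_add, l1, co_add, m1, m2, add_zero, zero_add, hb2] at h
    exact h
  have hd3 : co (K := K) 1 0 (F (Ee3 K s t)).2.2 = co (K := K) s 0 (F (Ee1 K s t)).1 := by
    have h := congrArg (co (K := K) 2 1) EqW2
    have l1 : co (K := K) 2 1 ((X : Polynomial K) • (G (Pp2 K y)).2)
        = co (K := K) 2 0 (G (Pp2 K y)).2 := by
      have h2 := co_smulXpow (K := K) (a := 2) (e := 1) (i := 0) (by omega) (G (Pp2 K y)).2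
      rw [pow_one] at h2
      simpa using h2
    have m1 : co (K := K) 2 1 (mulTpow K t 2 0 (F (Ee3 K s t)).2.1) = 0 := by
      have h2 := co_mulTpow (K := K) (a := t) (b := 2) (e := 0) (i := 1) (by omega) (by omega)
        (F (Ee3 K s t)).2.1
      simpa [hd2'] using h2
    have m2 : co (K := K) 2 1 (mulTpow K 1 2 1 (F (Ee3 K s t)).2.2)
        = co (K := K) 1 0 (F (Ee3 K s t)).2.2 := by
      simpa using co_mulTpow (K := K) (a := 1) (b := 2) (e := 1) (i := 0) (by omega) (by omega) _
    rw [l1, co_add, m1, m2, zero_add, hh2] at h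
    exact h.symm
  -- decompositions and idempotency
  obtain ⟨pe1, hpe1⟩ := jmk_surjective y (G (Pp1 K y)).1
  obtain ⟨pe2, hpe2⟩ := jmk_surjective 2 (G (Pp1 K y)).2
  have hdecG1 : G (Pp1 K y) = pe1 • Pp1 K y + pe2 • Pp2 K y := by
    rw [← mk2]
    exact (Prod.ext hpe1 hpe2).symm
  have hpe10 : pe1.coeff 0 = co (K := K) y 0 (G (Pp1 K y)).1 := by
    have h := co_jmk (K := K) (a := y) (i := 0) (by omega) pe1
    rw [hpe1] at h
    exact h.symm
  have hpe20 : pe2.coeff 0 = co (K := K) 2 0 (G (Pp1 K y)).2 := by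
    have h := co_jmk (K := K) (a := 2) (i := 0) (by omega) pe2
    rw [hpe2] at h
    exact h.symm
  have hGsq : pe1 • G (Pp1 K y) + pe2 • G (Pp2 K y) = G (Pp1 K y) := by
    rw [← map_smul, ← map_smul, ← map_add, ← hdecG1, hGG']
  have hLsq : co (K := K) s 0 (F (Ee1 K s t)).1 * co (K := K) s 0 (F (Ee1 K s t)).1
      = co (K := K) s 0 (F (Ee1 K s t)).1 := by
    have h1 : pe1 • (G (Pp1 K y)).1 + pe2 • (G (Pp2 K y)).1 = (G (Pp1 K y)).1 := by
      have h := congrArg Prod.fst hGsq; simpa using h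
    have h2 := congrArg (co (K := K) y 0) h1
    rw [co_add, co_smul0 (by omega), co_smul0 (by omega), hpe10, he1, hh1, mul_zero,
      add_zero] at h2
    exact h2
  have hL01 : co (K := K) s 0 (F (Ee1 K s t)).1 = 0 ∨ co (K := K) s 0 (F (Ee1 K s t)).1 = 1 := by
    have h : co (K := K) s 0 (F (Ee1 K s t)).1 * (co (K := K) s 0 (F (Ee1 K s t)).1 - 1) = 0 := by
      rw [mul_sub, mul_one, hLsq, sub_self]
    rcases mul_eq_zero.1 h with h | h
    · exact Or.inl h
    · exact Or.inr (sub_eq_zero.1 h)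
  have he2 : co (K := K) 2 0 (G (Pp1 K y)).2 = 0 := by
    have h1 : pe1 • (G (Pp1 K y)).2 + pe2 • (G (Pp2 K y)).2 = (G (Pp1 K y)).2 := by
      have h := congrArg Prod.snd hGsq; simpa using h
    have h2 := congrArg (co (K := K) 2 0) h1
    rw [co_add, co_smul0 (by omega), co_smul0 (by omega), hpe10, he1, hpe20, hh2] at h2
    exact cancel2 hL01 h2
  obtain ⟨pa1, hpa1⟩ := jmk_surjective s (F (Ee1 K s t)).1
  obtain ⟨pa2, hpa2⟩ := jmk_surjective t (F (Ee1 K s t)).2.1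
  obtain ⟨pa3, hpa3⟩ := jmk_surjective 1 (F (Ee1 K s t)).2.2
  have hdecF1 : F (Ee1 K s t) = pa1 • Ee1 K s t + pa2 • Ee2 K s t + pa3 • Ee3 K s t := by
    rw [← mk3]
    exact (Prod.ext hpa1 (Prod.ext hpa2 hpa3)).symm
  have hpa10 : pa1.coeff 0 = co (K := K) s 0 (F (Ee1 K s t)).1 := by
    have h := co_jmk (K := K) (a := s) (i := 0) (by omega) pa1
    rw [hpa1] at h
    exact h.symm
  have hpa20 : pa2.coeff 0 = 0 := by
    have h := co_jmk (K := K) (a := t) (i := 0) (by omega) pa2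
    rw [hpa2] at h
    rw [← h]
    exact ha2
  have hpa30 : pa3.coeff 0 = co (K := K) 1 0 (F (Ee1 K s t)).2.2 := by
    have h := co_jmk (K := K) (a := 1) (i := 0) (by omega) pa3
    rw [hpa3] at h
    exact h.symm
  have hFsq1 : pa1 • F (Ee1 K s t) + pa2 • F (Ee2 K s t) + pa3 • F (Ee3 K s t)
      = F (Ee1 K s t) := by
    rw [← map_smul, ← map_smul, ← map_smul, ← map_add, ← map_add, ← hdecF1, hFF']
  have ha3 : co (K := K) 1 0 (F (Ee1 K s t)).2.2 = 0 := by
    have h1 : pa1 • (F (Ee1 K s t)).2.2 + pa2 • (F (Ee2 K s t)).2.2 + pa3 • (F (Ee3 K s t)).2.2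
        = (F (Ee1 K s t)).2.2 := by
      have h := congrArg (fun z => z.2.2) hFsq1; simpa using h
    have h2 := congrArg (co (K := K) 1 0) h1
    rw [co_add, co_add, co_smul0 (by omega), co_smul0 (by omega), co_smul0 (by omega),
      hpa10, hpa20, hpa30, hd3, zero_mul, add_zero] at h2
    exact cancel2 hL01 h2
  obtain ⟨pb1, hpb1⟩ := jmk_surjective s (F (Ee2 K s t)).1
  obtain ⟨pb2, hpb2⟩ := jmk_surjective t (F (Ee2 K s t)).2.1
  obtain ⟨pb3, hpb3⟩ := jmk_surjective 1 (F (Ee2 K s t)).2.2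
  have hdecF2 : F (Ee2 K s t) = pb1 • Ee1 K s t + pb2 • Ee2 K s t + pb3 • Ee3 K s t := by
    rw [← mk3]
    exact (Prod.ext hpb1 (Prod.ext hpb2 hpb3)).symm
  have hpb10 : pb1.coeff 0 = 0 := by
    have h := co_jmk (K := K) (a := s) (i := 0) (by omega) pb1
    rw [hpb1] at h
    rw [← h]
    exact hb1
  have hpb20 : pb2.coeff 0 = co (K := K) t 0 (F (Ee2 K s t)).2.1 := by
    have h := co_jmk (K := K) (a := t) (i := 0) (by omega) pb2
    rw [hpb2] at h
    exact h.symm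
  have hpb30 : pb3.coeff 0 = co (K := K) 1 0 (F (Ee2 K s t)).2.2 := by
    have h := co_jmk (K := K) (a := 1) (i := 0) (by omega) pb3
    rw [hpb3] at h
    exact h.symm
  have hFsq2 : pb1 • F (Ee1 K s t) + pb2 • F (Ee2 K s t) + pb3 • F (Ee3 K s t)
      = F (Ee2 K s t) := by
    rw [← map_smul, ← map_smul, ← map_smul, ← map_add, ← map_add, ← hdecF2, hFF']
  have hb3 : co (K := K) 1 0 (F (Ee2 K s t)).2.2 = 0 := by
    have h1 : pb1 • (F (Ee1 K s t)).2.2 + pb2 • (F (Ee2 K s t)).2.2 + pb3 • (F (Ee3 K s t)).2.2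
        = (F (Ee2 K s t)).2.2 := by
      have h := congrArg (fun z => z.2.2) hFsq2; simpa using h
    have h2 := congrArg (co (K := K) 1 0) h1
    rw [co_add, co_add, co_smul0 (by omega), co_smul0 (by omega), co_smul0 (by omega),
      hpb10, hpb20, hb2, hpb30, hd3, zero_mul, zero_add] at h2
    exact cancel2 hL01 h2
  have kill3 : ∀ x : J K s × (J K t × J K 1), (X : Polynomial K) ^ s • x = 0 := by
    intro x
    have h1 := jkill (K := K) (le_refl s) x.1
    have h2 := jkill (K := K) (show t ≤ s by omega) x.2.1
    have h3 := jkill (K := K) (show (1 : ℕ) ≤ s by omega) x.2.2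
    calc (X : Polynomial K) ^ s • x
        = ((X : Polynomial K) ^ s • x.1,
           (X : Polynomial K) ^ s • x.2.1, (X : Polynomial K) ^ s • x.2.2) := rfl
      _ = 0 := by rw [h1, h2, h3]; rfl
  have kill2 : ∀ x : J K y × J K 2, (X : Polynomial K) ^ y • x = 0 := by
    intro x
    have h1 := jkill (K := K) (le_refl y) x.1
    have h2 := jkill (K := K) (show (2 : ℕ) ≤ y by omega) x.2
    calc (X : Polynomial K) ^ y • x
        = ((X : Polynomial K) ^ y • x.1, (X : Polynomial K) ^ y • x.2) := rfl
      _ = 0 := by rw [h1, h2]; rfl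
  rcases hL01 with hL0 | hL1
  · left
    refine ⟨idem_eq_zero s kill3 F hFF ?_, idem_eq_zero y kill2 G hGG ?_⟩
    · exact hXdvd3 (by omega) (by omega) F hL0 ha2 ha3 hb1 (hb2.trans hL0) hb3 hd1 hd2
        (hd3.trans hL0)
    · exact hXdvd2 (by omega) G (he1.trans hL0) he2 hh1 (hh2.trans hL0)
  · right
    constructor
    · set F' : (J K s × (J K t × J K 1)) →ₗ[Polynomial K] (J K s × (J K t × J K 1)) :=
        LinearMap.id - F with hF'def
      have hF' : F' ∘ₗ F' = F' := by
        rw [hF'def, LinearMap.sub_comp, LinearMap.comp_sub, LinearMap.comp_sub,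
          LinearMap.id_comp, LinearMap.id_comp, LinearMap.comp_id, hFF]
        abel
      have hcomp : ∀ z, F' z = z - F z := fun z => rfl
      have c11 : co (K := K) s 0 (F' (Ee1 K s t)).1 = 0 := by
        rw [hcomp, Prod.fst_sub, co_sub, show (Ee1 K s t).1 = jmk K s 1 from rfl,
          co_jmk (by omega), Polynomial.coeff_one_zero, hL1, sub_self]
      have c21 : co (K := K) t 0 (F' (Ee1 K s t)).2.1 = 0 := by
        rw [hcomp, Prod.snd_sub, Prod.fst_sub, co_sub,
          show (Ee1 K s t).2.1 = (0 : J K t) from rfl, co_zero, ha2, sub_self]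
      have c31 : co (K := K) 1 0 (F' (Ee1 K s t)).2.2 = 0 := by
        rw [hcomp, Prod.snd_sub, Prod.snd_sub, co_sub,
          show (Ee1 K s t).2.2 = (0 : J K 1) from rfl, co_zero, ha3, sub_self]
      have c12 : co (K := K) s 0 (F' (Ee2 K s t)).1 = 0 := by
        rw [hcomp, Prod.fst_sub, co_sub, show (Ee2 K s t).1 = (0 : J K s) from rfl,
          co_zero, hb1, sub_self]
      have c22 : co (K := K) t 0 (F' (Ee2 K s t)).2.1 = 0 := by
        rw [hcomp, Prod.snd_sub, Prod.fst_sub, co_sub,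
          show (Ee2 K s t).2.1 = jmk K t 1 from rfl, co_jmk (by omega),
          Polynomial.coeff_one_zero, hb2, hL1, sub_self]
      have c32 : co (K := K) 1 0 (F' (Ee2 K s t)).2.2 = 0 := by
        rw [hcomp, Prod.snd_sub, Prod.snd_sub, co_sub,
          show (Ee2 K s t).2.2 = (0 : J K 1) from rfl, co_zero, hb3, sub_self]
      have c13 : co (K := K) s 0 (F' (Ee3 K s t)).1 = 0 := by
        rw [hcomp, Prod.fst_sub, co_sub, show (Ee3 K s t).1 = (0 : J K s) from rfl,
          co_zero, hd1, sub_self]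
      have c23 : co (K := K) t 0 (F' (Ee3 K s t)).2.1 = 0 := by
        rw [hcomp, Prod.snd_sub, Prod.fst_sub, co_sub,
          show (Ee3 K s t).2.1 = (0 : J K t) from rfl, co_zero, hd2, sub_self]
      have c33 : co (K := K) 1 0 (F' (Ee3 K s t)).2.2 = 0 := by
        rw [hcomp, Prod.snd_sub, Prod.snd_sub, co_sub,
          show (Ee3 K s t).2.2 = jmk K 1 1 from rfl, co_jmk (by omega),
          Polynomial.coeff_one_zero, hd3, hL1, sub_self]
      have hFid : F' = 0 :=
        idem_eq_zero s kill3 _ hF'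
          (hXdvd3 (by omega) (by omega) _ c11 c21 c31 c12 c22 c32 c13 c23 c33)
      have hs : LinearMap.id - F = 0 := by rw [← hF'def]; exact hFid
      exact (sub_eq_zero.1 hs).symm
    · set G' : (J K y × J K 2) →ₗ[Polynomial K] (J K y × J K 2) :=
        LinearMap.id - G with hG'def
      have hG' : G' ∘ₗ G' = G' := by
        rw [hG'def, LinearMap.sub_comp, LinearMap.comp_sub, LinearMap.comp_sub,
          LinearMap.id_comp, LinearMap.id_comp, LinearMap.comp_id, hGG]
        abel
      have hcomp : ∀ z, G' z = z - G z := fun z => rfl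
      have d11 : co (K := K) y 0 (G' (Pp1 K y)).1 = 0 := by
        rw [hcomp, Prod.fst_sub, co_sub, show (Pp1 K y).1 = jmk K y 1 from rfl,
          co_jmk (by omega), Polynomial.coeff_one_zero, he1, hL1, sub_self]
      have d21 : co (K := K) 2 0 (G' (Pp1 K y)).2 = 0 := by
        rw [hcomp, Prod.snd_sub, co_sub, show (Pp1 K y).2 = (0 : J K 2) from rfl,
          co_zero, he2, sub_self]
      have d12 : co (K := K) y 0 (G' (Pp2 K y)).1 = 0 := by
        rw [hcomp, Prod.fst_sub, co_sub, show (Pp2 K y).1 = (0 : J K y) from rfl,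
          co_zero, hh1, sub_self]
      have d22 : co (K := K) 2 0 (G' (Pp2 K y)).2 = 0 := by
        rw [hcomp, Prod.snd_sub, co_sub, show (Pp2 K y).2 = jmk K 2 1 from rfl,
          co_jmk (by omega), Polynomial.coeff_one_zero, hh2, hL1, sub_self]
      have hGid : G' = 0 :=
        idem_eq_zero y kill2 _ hG' (hXdvd2 (by omega) _ d11 d21 d12 d22)
      have hs : LinearMap.id - G = 0 := by rw [← hG'def]; exact hGid
      exact (sub_eq_zero.1 hs).symm
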